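/- If 𝕃 is a d-LPP ideal in S = k[x_1,...,x_n] for a degree sequence d = (d_1,...,d_h), and V is the graded vector space spanned by the monomials of 𝕃 not lying in the monomial complete intersection P = (x_1^{d_1},...,x_h^{d_h}), so that 𝕃 = P ⊕ V, then: if V_D ≠ 0 for some degree D, then V_j ≠ 0 for all j with D ≤ j ≤ Σ_{i=1}^h (d_i - 1). -/
import Mathlib


open MvPolynomial

noncomputable section EGHDefs

/-- Total degree of an exponent vector. -/
def mdeg {n : ℕ} (a : Fin n →₀ ℕ) : ℕ := a.sum fun _ e => e

/-- `monLT a b` : the monomial `x^a` is strictly smaller than `x^b` in the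
lexicographic order with `x_1 > x_2 > ... > x_n`. -/
def monLT {n : ℕ} (a b : Fin n →₀ ℕ) : Prop :=
  ∃ i : Fin n, (∀ j : Fin n, j < i → a j = b j) ∧ a i < b i

/-- A lex-segment of exponent vectors in degree `j`. -/
def LexSeg {n : ℕ} (j : ℕ) (V : Set (Fin n →₀ ℕ)) : Prop :=
  (∀ a ∈ V, mdeg a = j) ∧ ∀ a ∈ V, ∀ b : Fin n →₀ ℕ, mdeg b = j → monLT a b → b ∈ V

variable (k : Type) [Field k] {n : ℕ}

/-- Hilbert function of a (homogeneous) ideal `I`: the `k`-dimension of its degree `j` part. -/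
def HF (I : Ideal (MvPolynomial (Fin n) k)) (j : ℕ) : ℕ :=
  Module.finrank k
    ↥(Submodule.restrictScalars k (I : Submodule (MvPolynomial (Fin n) k) (MvPolynomial (Fin n) k))
      ⊓ homogeneousSubmodule (Fin n) k j)

/-- Hilbert function of the quotient `S/I` in degree `j`. -/
def HFq (I : Ideal (MvPolynomial (Fin n) k)) (j : ℕ) : ℕ :=
  Module.finrank k
    ↥((homogeneousSubmodule (Fin n) k j).map (Ideal.Quotient.mkₐ k I).toLinearMap)

/-- `I` is a homogeneous ideal. -/
def IsHomog (I : Ideal (MvPolynomial (Fin n) k)) : Prop :=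
  ∀ f ∈ I, ∀ j : ℕ, homogeneousComponent j f ∈ I

/-- `f 0, f 1, ..., f (h-1)` is a regular sequence. -/
def IsRegSeq {h : ℕ} (f : Fin h → MvPolynomial (Fin n) k) : Prop :=
  Ideal.span (Set.range f) ≠ ⊤ ∧
  ∀ i : Fin h, ∀ g : MvPolynomial (Fin n) k,
    g * f i ∈ Ideal.span (f '' {j | j < i}) → g ∈ Ideal.span (f '' {j | j < i})

/-- The monomial complete intersection `(x_1^{d_1}, ..., x_h^{d_h})`. -/
def powIdeal {h : ℕ} (hh : h ≤ n) (d : Fin h → ℕ) : Ideal (MvPolynomial (Fin n) k) :=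
  Ideal.span (Set.range fun i : Fin h => (X (Fin.castLE hh i) : MvPolynomial (Fin n) k) ^ d i)

/-- `L` is a lexicographic (monomial) ideal. -/
def IsLexIdeal (L : Ideal (MvPolynomial (Fin n) k)) : Prop :=
  (∀ f ∈ L, ∀ a ∈ f.support, (monomial a (1 : k)) ∈ L) ∧
  ∀ a b : Fin n →₀ ℕ, mdeg a = mdeg b → monLT a b →
    (monomial a (1 : k)) ∈ L → monomial b (1 : k) ∈ L

/-- `𝕃` is a `d`-LPP (lex-plus-power) ideal. -/
def IsLPP {h : ℕ} (hh : h ≤ n) (d : Fin h → ℕ) (𝕃 : Ideal (MvPolynomial (Fin n) k)) : Prop :=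
  ∃ L : Ideal (MvPolynomial (Fin n) k), IsLexIdeal k L ∧ 𝕃 = powIdeal k hh d ⊔ L

/-- `I` contains a regular sequence of degrees `d`. -/
def ContainsRS {h : ℕ} (d : Fin h → ℕ) (I : Ideal (MvPolynomial (Fin n) k)) : Prop :=
  ∃ f : Fin h → MvPolynomial (Fin n) k,
    IsRegSeq k f ∧ (∀ i, (f i).IsHomogeneous (d i)) ∧ ∀ i, f i ∈ I

/-- `I` satisfies the Eisenbud-Green-Harris conjecture for the degree sequence `d`:
there is a `d`-LPP ideal with the same Hilbert function as `I`. -/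
def EGH {h : ℕ} (hh : h ≤ n) (d : Fin h → ℕ) (I : Ideal (MvPolynomial (Fin n) k)) : Prop :=
  ∃ 𝕃 : Ideal (MvPolynomial (Fin n) k), IsLPP k hh d 𝕃 ∧ ∀ j : ℕ, HF k 𝕃 j = HF k I j

end EGHDefs


section Stmt4Aux
open MvPolynomial

lemma stmt4_mem_powIdeal (k : Type) [Field k] {n h : ℕ} (hh : h ≤ n) (d : Fin h → ℕ)
    (c : Fin n →₀ ℕ) :
    monomial c (1 : k) ∈ powIdeal k hh d ↔ ∃ i : Fin h, d i ≤ c (Fin.castLE hh i) := by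
  have hset : (Set.range fun i : Fin h => (X (Fin.castLE hh i) : MvPolynomial (Fin n) k) ^ d i)
      = (fun s => monomial s (1 : k)) ''
        (Set.range fun i : Fin h => Finsupp.single (Fin.castLE hh i) (d i)) := by
    rw [← Set.range_comp]
    ext f
    simp [X_pow_eq_monomial, Function.comp]
  rw [powIdeal, hset, mem_ideal_span_monomial_image]
  simp [support_monomial, Finsupp.single_le_iff]

lemma stmt4_mdeg_add_single {n : ℕ} (b : Fin n →₀ ℕ) (i : Fin n) :
    mdeg (b + Finsupp.single i 1) = mdeg b + 1 := by
  unfold mdeg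
  rw [Finsupp.sum_add_index' (fun _ => rfl) (fun _ _ _ => rfl), Finsupp.sum_single_index rfl]

lemma stmt4_sum_le_mdeg {n h : ℕ} (hh : h ≤ n) (b : Fin n →₀ ℕ) :
    ∑ i : Fin h, b (Fin.castLE hh i) ≤ mdeg b := by
  unfold mdeg
  rw [Finsupp.sum_fintype _ _ (fun _ => rfl)]
  calc ∑ i : Fin h, b (Fin.castLE hh i)
      = ∑ x ∈ Finset.univ.map (Fin.castLEEmb hh), b x := by rw [Finset.sum_map]; rfl
    _ ≤ ∑ x : Fin n, b x := Finset.sum_le_sum_of_subset (Finset.subset_univ _)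

end Stmt4Aux

/-- for an LPP ideal `𝕃 = P ⊕ V`, if `V` is nonzero in degree `D` then it is
nonzero in every degree between `D` and the socle degree `∑ (d_i - 1)`. -/
theorem stmt4 (k : Type) [Field k] {n h : ℕ} (hh : h ≤ n) (d : Fin h → ℕ)
    (hmono : Monotone d) (hpos : ∀ i, 1 ≤ d i)
    (𝕃 : Ideal (MvPolynomial (Fin n) k)) (hL : IsLPP k hh d 𝕃)
    (D : ℕ) (a : Fin n →₀ ℕ) (ha : mdeg a = D)
    (haL : monomial a (1 : k) ∈ 𝕃) (haP : monomial a (1 : k) ∉ powIdeal k hh d) :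
    ∀ j : ℕ, D ≤ j → j ≤ ∑ i, (d i - 1) →
      ∃ b : Fin n →₀ ℕ, mdeg b = j ∧
        monomial b (1 : k) ∈ 𝕃 ∧ monomial b (1 : k) ∉ powIdeal k hh d := by
  intro j hDj hjS
  induction j, hDj using Nat.le_induction with
  | base => exact ⟨a, ha, haL, haP⟩
  | succ j hDj ih =>
    obtain ⟨b, hb, hbL, hbP⟩ := ih (le_trans (Nat.le_succ j) hjS)
    rw [stmt4_mem_powIdeal] at hbP
    push_neg at hbP
    -- find i with b_i + 1 < d i
    have hex : ∃ i : Fin h, b (Fin.castLE hh i) + 1 < d i := by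
      by_contra hco
      push_neg at hco
      have hge : ∀ i : Fin h, d i - 1 ≤ b (Fin.castLE hh i) := fun i => by
        have h1 := hbP i
        have h2 := hco i
        omega
      have : ∑ i, (d i - 1) ≤ mdeg b :=
        le_trans (Finset.sum_le_sum fun i _ => hge i) (stmt4_sum_le_mdeg hh b)
      omega
    obtain ⟨i, hi⟩ := hex
    refine ⟨b + Finsupp.single (Fin.castLE hh i) 1, ?_, ?_, ?_⟩
    · rw [stmt4_mdeg_add_single, hb]
    · have : (monomial (b + Finsupp.single (Fin.castLE hh i) 1) (1 : k)) =
          monomial b (1 : k) * X (Fin.castLE hh i) := by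
        rw [X, monomial_mul, mul_one]
      rw [this]
      exact Ideal.mul_mem_right _ _ hbL
    · rw [stmt4_mem_powIdeal]
      push_neg
      intro i'
      by_cases hii : i' = i
      · subst hii
        simpa using hi
      · have : Fin.castLE hh i' ≠ Fin.castLE hh i := by
          simpa [Fin.castLE_inj] using hii
        simp only [Finsupp.add_apply, Finsupp.single_apply, if_neg (Ne.symm this), add_zero]
        exact hbP i'
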